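/- Let G be a connected P5-free graph with an efficient dominating set D, |D| ≥ 2, and let d_1, d_2 ∈ D be distinct. If there is no edge between N(d_1) \ D and N(d_2) \ D, then G contains an induced P5. (Contrapositive of edge-existence between neighborhoods.) -/

import Mathlib

open SimpleGraph

/-- `D` is an efficient dominating set: every vertex is dominated by exactly one vertex of `D`
(a vertex dominates itself and its neighbors). -/
def SimpleGraph.IsEDS {V : Type*} (G : SimpleGraph V) (D : Set V) : Prop :=
  ∀ v : V, ∃! d, d ∈ D ∧ (d = v ∨ G.Adj d v)

/-- The closed neighborhood of a vertex. -/
def SimpleGraph.closedNbhd {V : Type*} (G : SimpleGraph V) (v : V) : Set V :=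
  insert v (G.neighborSet v)

/-- A homogeneous set: at least two vertices, not all of them, and every outside vertex is
adjacent to all or to none of them. -/
def SimpleGraph.IsHomogeneousSet {V : Type*} (G : SimpleGraph V) (H : Set V) : Prop :=
  2 ≤ H.ncard ∧ H ≠ Set.univ ∧
    ∀ v ∉ H, (∀ h ∈ H, G.Adj v h) ∨ (∀ h ∈ H, ¬ G.Adj v h)

/-- A prime graph: at least two vertices and no homogeneous set. -/
def SimpleGraph.IsPrime {V : Type*} [Fintype V] (G : SimpleGraph V) : Prop :=
  2 ≤ Fintype.card V ∧ ∀ H : Set V, ¬ G.IsHomogeneousSet H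

/-- `G` is `P₅`-free: no induced subgraph isomorphic to the path on five vertices. -/
def SimpleGraph.P5Free {V : Type*} (G : SimpleGraph V) : Prop :=
  ¬ Nonempty (SimpleGraph.pathGraph 5 ↪g G)

/-- The graph `2P₂`: the disjoint union of two edges. -/
def twoP2 : SimpleGraph (Fin 4) :=
  SimpleGraph.fromRel (fun a b => (a = 0 ∧ b = 1) ∨ (a = 2 ∧ b = 3))

/-- `G` is `2P₂`-free: no induced subgraph isomorphic to `2P₂`. -/
def SimpleGraph.TwoP2Free {V : Type*} (G : SimpleGraph V) : Prop :=
  ¬ Nonempty (twoP2 ↪g G)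

/-- A thin spider: a split graph with a clique side `C` and independent side `I`,
with a perfect matching between `C` and `I`. -/
def SimpleGraph.IsThinSpider {V : Type*} (G : SimpleGraph V) : Prop :=
  ∃ C I : Set V, Disjoint C I ∧ C ∪ I = Set.univ ∧ G.IsClique C ∧
    (∀ a ∈ I, ∀ b ∈ I, a ≠ b → ¬ G.Adj a b) ∧
    (∀ c ∈ C, ∃! i, i ∈ I ∧ G.Adj c i) ∧
    (∀ i ∈ I, ∃! c, c ∈ C ∧ G.Adj i c)

theorem stmt_14 {V : Type*} (G : SimpleGraph V) (hconn : G.Connected)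
    (D : Set V) (hD : G.IsEDS D) (hcard : 2 ≤ D.ncard)
    (d₁ d₂ : V) (hd₁ : d₁ ∈ D) (hd₂ : d₂ ∈ D) (hne : d₁ ≠ d₂)
    (hnoedge : ¬ ∃ x ∈ G.neighborSet d₁ \ D, ∃ y ∈ G.neighborSet d₂ \ D, G.Adj x y) :
    Nonempty (SimpleGraph.pathGraph 5 ↪g G) := by
  -- a shortest walk from d₁ to d₂
  obtain ⟨p, hp⟩ := (hconn.preconnected d₁ d₂).exists_walk_length_eq_dist
  -- helper: adjacent vertices are at distance ≤ 1
  have hadj1 : ∀ {u v : V}, G.Adj u v → G.dist u v ≤ 1 := by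
    intro u v h
    simpa using G.dist_le (Walk.cons h Walk.nil)
  cases p with
  | nil => exact absurd rfl hne
  | cons h1 q1 =>
    rename_i a
    cases q1 with
    | nil => exact absurd ((hD d₂).unique ⟨hd₁, Or.inr h1⟩ ⟨hd₂, Or.inl rfl⟩) hne
    | cons h2 q2 =>
      rename_i b
      cases q2 with
      | nil => exact absurd ((hD a).unique ⟨hd₁, Or.inr h1⟩ ⟨hd₂, Or.inr h2.symm⟩) hne
      | cons h3 q3 =>
        rename_i c
        cases q3 with
        | nil =>
          exfalso
          have hxD : a ∉ D := fun hxD =>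
            G.irrefl (((hD a).unique ⟨hd₁, Or.inr h1⟩ ⟨hxD, Or.inl rfl⟩) ▸ h1)
          have hyD : b ∉ D := fun hyD =>
            G.irrefl ((((hD b).unique ⟨hd₂, Or.inr h3.symm⟩ ⟨hyD, Or.inl rfl⟩)) ▸ h3.symm)
          exact hnoedge ⟨a, ⟨h1, hxD⟩, b, ⟨h3.symm, hyD⟩, h2⟩
        | cons h4 q4 =>
          rename_i e
          -- now d₁ -a- b -c- e and q4 : walk from e to d₂
          have hlen : q4.length + 4 = G.dist d₁ d₂ := by
            simpa [Walk.length_cons, add_assoc] using hp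
          -- upper bounds on distances from d₁
          have ha1 : G.dist d₁ a ≤ 1 := hadj1 h1
          have hb2 : G.dist d₁ b ≤ 2 := by
            simpa using G.dist_le (Walk.cons h1 (Walk.cons h2 Walk.nil))
          have hc3 : G.dist d₁ c ≤ 3 := by
            simpa using G.dist_le (Walk.cons h1 (Walk.cons h2 (Walk.cons h3 Walk.nil)))
          -- lower bounds via suffix walks and triangle inequality
          have hbd : G.dist b d₂ ≤ q4.length + 2 := by
            simpa [Walk.length_cons, add_assoc] using G.dist_le (Walk.cons h3 (Walk.cons h4 q4))
          have hcd : G.dist c d₂ ≤ q4.length + 1 := by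
            simpa [Walk.length_cons] using G.dist_le (Walk.cons h4 q4)
          have hed : G.dist e d₂ ≤ q4.length := G.dist_le q4
          have htb := hconn.dist_triangle (u := d₁) (v := b) (w := d₂)
          have htc := hconn.dist_triangle (u := d₁) (v := c) (w := d₂)
          have hte := hconn.dist_triangle (u := d₁) (v := e) (w := d₂)
          have hb2' : 2 ≤ G.dist d₁ b := by omega
          have hc3' : 3 ≤ G.dist d₁ c := by omega
          have he4' : 4 ≤ G.dist d₁ e := by omega
          -- non-adjacencies
          have nd1b : ¬ G.Adj d₁ b := fun h => by have := hadj1 h; omega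
          have nd1c : ¬ G.Adj d₁ c := fun h => by have := hadj1 h; omega
          have nd1e : ¬ G.Adj d₁ e := fun h => by have := hadj1 h; omega
          have nac : ¬ G.Adj a c := fun h => by
            have := hconn.dist_triangle (u := d₁) (v := a) (w := c)
            have := hadj1 h; omega
          have nae : ¬ G.Adj a e := fun h => by
            have := hconn.dist_triangle (u := d₁) (v := a) (w := e)
            have := hadj1 h; omega
          have nbe : ¬ G.Adj b e := fun h => by
            have := hconn.dist_triangle (u := d₁) (v := b) (w := e)
            have := hadj1 h; omega
          -- distinctness
          have hd1self : G.dist d₁ d₁ = 0 := by simp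
          have ne_d1a : d₁ ≠ a := h1.ne
          have ne_d1b : d₁ ≠ b := fun h => by rw [← h] at hb2'; omega
          have ne_d1c : d₁ ≠ c := fun h => by rw [← h] at hc3'; omega
          have ne_d1e : d₁ ≠ e := fun h => by rw [← h] at he4'; omega
          have ne_ab : a ≠ b := h2.ne
          have ne_ac : a ≠ c := fun h => by rw [h] at ha1; omega
          have ne_ae : a ≠ e := fun h => by rw [h] at ha1; omega
          have ne_bc : b ≠ c := h3.ne
          have ne_be : b ≠ e := fun h => by rw [h] at hb2; omega
          have ne_ce : c ≠ e := h4.ne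
          have h1' : G.Adj a d₁ := h1.symm
          have h2' : G.Adj b a := h2.symm
          have h3' : G.Adj c b := h3.symm
          have h4' : G.Adj e c := h4.symm
          have nd1b' : ¬ G.Adj b d₁ := fun h => nd1b h.symm
          have nd1c' : ¬ G.Adj c d₁ := fun h => nd1c h.symm
          have nd1e' : ¬ G.Adj e d₁ := fun h => nd1e h.symm
          have nac' : ¬ G.Adj c a := fun h => nac h.symm
          have nae' : ¬ G.Adj e a := fun h => nae h.symm
          have nbe' : ¬ G.Adj e b := fun h => nbe h.symm
          have ne_d1a' : a ≠ d₁ := ne_d1a.symm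
          have ne_d1b' : b ≠ d₁ := ne_d1b.symm
          have ne_d1c' : c ≠ d₁ := ne_d1c.symm
          have ne_d1e' : e ≠ d₁ := ne_d1e.symm
          have ne_ab' : b ≠ a := ne_ab.symm
          have ne_ac' : c ≠ a := ne_ac.symm
          have ne_ae' : e ≠ a := ne_ae.symm
          have ne_bc' : c ≠ b := ne_bc.symm
          have ne_be' : e ≠ b := ne_be.symm
          have ne_ce' : e ≠ c := ne_ce.symm
          refine ⟨⟨⟨![d₁, a, b, c, e], ?_⟩, ?_⟩⟩
          · intro i j hij
            fin_cases i <;> fin_cases j <;> simp at hij ⊢ <;>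
              first
                | rfl
                | exact absurd hij ne_d1a | exact absurd hij ne_d1a'
                | exact absurd hij ne_d1b | exact absurd hij ne_d1b'
                | exact absurd hij ne_d1c | exact absurd hij ne_d1c'
                | exact absurd hij ne_d1e | exact absurd hij ne_d1e'
                | exact absurd hij ne_ab | exact absurd hij ne_ab'
                | exact absurd hij ne_ac | exact absurd hij ne_ac'
                | exact absurd hij ne_ae | exact absurd hij ne_ae'
                | exact absurd hij ne_bc | exact absurd hij ne_bc'
                | exact absurd hij ne_be | exact absurd hij ne_be'
                | exact absurd hij ne_ce | exact absurd hij ne_ce'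
          · intro i j
            show G.Adj (![d₁, a, b, c, e] i) (![d₁, a, b, c, e] j) ↔ _
            fin_cases i <;> fin_cases j <;>
              simp [pathGraph_adj, SimpleGraph.irrefl, h1, h2, h3, h4, h1', h2', h3', h4',
                nd1b, nd1c, nd1e, nac, nae, nbe, nd1b', nd1c', nd1e', nac', nae', nbe'] <;>
              decide
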